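/- Let X be a real Hilbert space with inner product ⟨·,·⟩ and induced norm ‖·‖, and let (X_ℓ)_{ℓ∈ℕ₀} be subspaces of X with X_ℓ ⊆ X_{ℓ+1} for all ℓ ∈ ℕ₀. Let A : X → X satisfy ⟨A u − A v, u − v⟩ ≥ α·‖u − v‖² and ‖A u − A v‖ ≤ L·‖u − v‖ for all u, v ∈ X, where 0 < α ≤ L. Let f ∈ X, let E : X → ℝ satisfy that for all v, w ∈ X the function t ↦ E(v + t·w) is differentiable at every t ∈ ℝ with derivative ⟨A(v + t·w) − f, w⟩, let u⋆ ∈ X satisfy ⟨A u⋆ − f, v⟩ = 0 for all v ∈ X, and for each ℓ let u_ℓ⋆ ∈ X_ℓ satisfy ⟨A u_ℓ⋆ − f, v⟩ = 0 for all v ∈ X_ℓ. Then, for all ℓ ∈ ℕ₀, there holds ∑_{ℓ'=ℓ}^{∞} ‖u_{ℓ'+1}⋆ − u_{ℓ'}⋆‖² ≤ (L/α)·‖u⋆ − u_ℓ⋆‖², i.e., quasi-orthogonality holds with constant C_orth = L/α and exponent δ = 1. -/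

import Mathlib

open scoped RealInnerProductSpace

private lemma phi_zero_le_one {φ : ℝ → ℝ} {φ' : ℝ → ℝ}
    (hd : ∀ t, HasDerivAt φ (φ' t) t)
    (hnn : ∀ t : ℝ, 0 < t → 0 ≤ φ' t) : φ 0 ≤ φ 1 := by
  have hmono : MonotoneOn φ (Set.Ici (0:ℝ)) := by
    apply monotoneOn_of_deriv_nonneg (convex_Ici 0)
    · exact fun t _ => (hd t).continuousAt.continuousWithinAt
    · exact fun t _ => (hd t).differentiableAt.differentiableWithinAt
    · intro t ht
      rw [interior_Ici] at ht
      rw [(hd t).deriv]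
      exact hnn t ht
  exact hmono (Set.mem_Ici.mpr le_rfl) (Set.mem_Ici.mpr zero_le_one) zero_le_one

private lemma energy_bounds
    {X : Type*} [NormedAddCommGroup X] [InnerProductSpace ℝ X]
    (A : X → X) (α L : ℝ)
    (hmono : ∀ u v : X, α * ‖u - v‖ ^ 2 ≤ ⟪A u - A v, u - v⟫)
    (hlip : ∀ u v : X, ‖A u - A v‖ ≤ L * ‖u - v‖)
    (f : X) (E : X → ℝ)
    (hE : ∀ v w : X, ∀ t : ℝ,
      HasDerivAt (fun s : ℝ => E (v + s • w)) ⟪A (v + t • w) - f, w⟫ t)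
    (u v : X) (horth : ⟪A u - f, v - u⟫ = 0) :
    α / 2 * ‖v - u‖ ^ 2 ≤ E v - E u ∧ E v - E u ≤ L / 2 * ‖v - u‖ ^ 2 := by
  set w := v - u with hw
  have hv1 : u + (1:ℝ) • w = v := by simp [hw]
  have hv0 : u + (0:ℝ) • w = u := by simp
  set d := ‖w‖ ^ 2 with hd
  -- key inner product facts along the segment
  have hAf : ∀ t : ℝ, ⟪A (u + t • w) - f, w⟫ = ⟪A (u + t • w) - A u, w⟫ := by
    intro t
    have : A (u + t • w) - f = (A (u + t • w) - A u) + (A u - f) := by abel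
    rw [this, inner_add_left, horth, add_zero]
  have hlowinner : ∀ t : ℝ, 0 < t → α * d * t ≤ ⟪A (u + t • w) - A u, w⟫ := by
    intro t ht
    have h1 := hmono (u + t • w) u
    have h2 : u + t • w - u = t • w := by abel
    rw [h2, real_inner_smul_right, norm_smul] at h1
    have h3 : (‖t‖ * ‖w‖) ^ 2 = t ^ 2 * d := by
      rw [hd, Real.norm_eq_abs, mul_pow, sq_abs]
    rw [h3] at h1
    nlinarith
  have hupinner : ∀ t : ℝ, 0 < t → ⟪A (u + t • w) - A u, w⟫ ≤ L * d * t := by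
    intro t ht
    have h1 := real_inner_le_norm (A (u + t • w) - A u) w
    have h2 := hlip (u + t • w) u
    have h3 : u + t • w - u = t • w := by abel
    rw [h3, norm_smul, Real.norm_eq_abs, abs_of_pos ht] at h2
    have h4 : ‖A (u + t • w) - A u‖ * ‖w‖ ≤ L * (t * ‖w‖) * ‖w‖ :=
      mul_le_mul_of_nonneg_right h2 (norm_nonneg w)
    calc ⟪A (u + t • w) - A u, w⟫ ≤ ‖A (u + t • w) - A u‖ * ‖w‖ := h1
      _ ≤ L * (t * ‖w‖) * ‖w‖ := h4
      _ = L * d * t := by rw [hd]; ring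
  constructor
  · -- lower bound
    have key : (fun t : ℝ => E (u + t • w) - α / 2 * d * t ^ 2) 0
        ≤ (fun t : ℝ => E (u + t • w) - α / 2 * d * t ^ 2) 1 := by
      apply phi_zero_le_one
        (φ := fun t : ℝ => E (u + t • w) - α / 2 * d * t ^ 2)
        (φ' := fun t => ⟪A (u + t • w) - f, w⟫ - α * d * t)
      · intro t
        have h1 := hE u w t
        have h2 : HasDerivAt (fun t : ℝ => α / 2 * d * t ^ 2)
            (α * d * t) t := by
          have := (hasDerivAt_pow 2 t).const_mul (α / 2 * d)
          refine this.congr_deriv ?_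
          push_cast; ring
        exact h1.sub h2
      · intro t ht
        rw [hAf t]
        have := hlowinner t ht
        linarith
    simp only [hv1, hv0] at key
    simp only [one_pow, mul_one, ne_eq, OfNat.ofNat_ne_zero, not_false_eq_true,
      zero_pow, mul_zero, sub_zero] at key
    rw [hd] at key ⊢
    linarith
  · -- upper bound
    have key : (fun t : ℝ => L / 2 * d * t ^ 2 - E (u + t • w)) 0
        ≤ (fun t : ℝ => L / 2 * d * t ^ 2 - E (u + t • w)) 1 := by
      apply phi_zero_le_one
        (φ := fun t : ℝ => L / 2 * d * t ^ 2 - E (u + t • w))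
        (φ' := fun t => L * d * t - ⟪A (u + t • w) - f, w⟫)
      · intro t
        have h1 := hE u w t
        have h2 : HasDerivAt (fun t : ℝ => L / 2 * d * t ^ 2)
            (L * d * t) t := by
          have := (hasDerivAt_pow 2 t).const_mul (L / 2 * d)
          refine this.congr_deriv ?_
          push_cast; ring
        exact h2.sub h1
      · intro t ht
        rw [hAf t]
        have := hupinner t ht
        linarith
    simp only [hv1, hv0] at key
    simp only [one_pow, mul_one, ne_eq, OfNat.ofNat_ne_zero, not_false_eq_true,
      zero_pow, mul_zero, zero_sub, neg_le_sub_iff_le_add] at key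
    rw [hd] at key ⊢
    linarith

/-- Quasi-orthogonality with constant `L/α` and exponent `δ = 1` for Galerkin
solutions of a strongly monotone, Lipschitz continuous operator equation on
nested subspaces. -/
theorem quasi_orthogonality_monotone
    {X : Type*} [NormedAddCommGroup X] [InnerProductSpace ℝ X]
    (Xl : ℕ → Submodule ℝ X) (hnested : ∀ ℓ, Xl ℓ ≤ Xl (ℓ + 1))
    (A : X → X) (α L : ℝ) (hα : 0 < α) (hαL : α ≤ L)
    (hmono : ∀ u v : X, α * ‖u - v‖ ^ 2 ≤ ⟪A u - A v, u - v⟫)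
    (hlip : ∀ u v : X, ‖A u - A v‖ ≤ L * ‖u - v‖)
    (f : X) (E : X → ℝ)
    (hE : ∀ v w : X, ∀ t : ℝ,
      HasDerivAt (fun s : ℝ => E (v + s • w)) ⟪A (v + t • w) - f, w⟫ t)
    (ustar : X) (hustar : ∀ v : X, ⟪A ustar - f, v⟫ = 0)
    (ul : ℕ → X) (hul : ∀ ℓ, ul ℓ ∈ Xl ℓ)
    (hGalerkin : ∀ ℓ, ∀ v ∈ Xl ℓ, ⟪A (ul ℓ) - f, v⟫ = 0) :
    ∀ ℓ : ℕ,
      (∑' k : ℕ, ENNReal.ofReal (‖ul (ℓ + k + 1) - ul (ℓ + k)‖ ^ 2))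
        ≤ ENNReal.ofReal (L / α * ‖ustar - ul ℓ‖ ^ 2) := by
  intro ℓ
  have key : ∀ u v : X, ⟪A u - f, v - u⟫ = 0 →
      α / 2 * ‖v - u‖ ^ 2 ≤ E v - E u ∧ E v - E u ≤ L / 2 * ‖v - u‖ ^ 2 :=
    energy_bounds A α L hmono hlip f E hE
  -- step bound
  have hstep : ∀ k : ℕ, α / 2 * ‖ul (k + 1) - ul k‖ ^ 2
      ≤ E (ul k) - E (ul (k + 1)) := by
    intro k
    have hmem : ul k ∈ Xl (k + 1) := hnested k (hul k)
    have horth : ⟪A (ul (k + 1)) - f, ul k - ul (k + 1)⟫ = 0 :=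
      hGalerkin (k + 1) _ (Submodule.sub_mem _ hmem (hul (k + 1)))
    have h := (key (ul (k + 1)) (ul k) horth).1
    rw [norm_sub_rev] at h
    linarith
  -- E ustar is the minimum
  have hlow : ∀ m : ℕ, E ustar ≤ E (ul m) := by
    intro m
    have h := (key ustar (ul m) (hustar _)).1
    nlinarith [sq_nonneg ‖ul m - ustar‖, norm_nonneg (ul m - ustar)]
  -- upper bound at level ℓ
  have hup : E (ul ℓ) - E ustar ≤ L / 2 * ‖ustar - ul ℓ‖ ^ 2 := by
    have h := (key ustar (ul ℓ) (hustar _)).2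
    rw [norm_sub_rev] at h
    linarith
  -- partial sum bound
  have hpartial : ∀ N : ℕ,
      ∑ k ∈ Finset.range N, ‖ul (ℓ + k + 1) - ul (ℓ + k)‖ ^ 2
        ≤ L / α * ‖ustar - ul ℓ‖ ^ 2 := by
    intro N
    have htel : ∑ k ∈ Finset.range N,
        (E (ul (ℓ + k)) - E (ul (ℓ + k + 1)))
        = E (ul ℓ) - E (ul (ℓ + N)) := by
      have := Finset.sum_range_sub' (fun k => E (ul (ℓ + k))) N
      simpa [add_assoc] using this
    have hsum : α / 2 * ∑ k ∈ Finset.range N, ‖ul (ℓ + k + 1) - ul (ℓ + k)‖ ^ 2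
        ≤ E (ul ℓ) - E (ul (ℓ + N)) := by
      rw [← htel, Finset.mul_sum]
      exact Finset.sum_le_sum fun k _ => hstep (ℓ + k)
    have h2 : E (ul ℓ) - E (ul (ℓ + N)) ≤ L / 2 * ‖ustar - ul ℓ‖ ^ 2 := by
      have := hlow (ℓ + N)
      linarith
    have h3 : α / 2 * ∑ k ∈ Finset.range N, ‖ul (ℓ + k + 1) - ul (ℓ + k)‖ ^ 2
        ≤ L / 2 * ‖ustar - ul ℓ‖ ^ 2 := le_trans hsum h2
    rw [div_mul_eq_mul_div, le_div_iff₀ hα]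
    nlinarith
  -- pass to the tsum
  rw [ENNReal.tsum_eq_iSup_sum]
  apply iSup_le
  intro s
  obtain ⟨N, hN⟩ := Finset.exists_nat_subset_range s
  calc ∑ k ∈ s, ENNReal.ofReal (‖ul (ℓ + k + 1) - ul (ℓ + k)‖ ^ 2)
      ≤ ∑ k ∈ Finset.range N, ENNReal.ofReal (‖ul (ℓ + k + 1) - ul (ℓ + k)‖ ^ 2) :=
        Finset.sum_le_sum_of_subset hN
    _ = ENNReal.ofReal (∑ k ∈ Finset.range N, ‖ul (ℓ + k + 1) - ul (ℓ + k)‖ ^ 2) :=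
        (ENNReal.ofReal_sum_of_nonneg fun i _ => sq_nonneg _).symm
    _ ≤ ENNReal.ofReal (L / α * ‖ustar - ul ℓ‖ ^ 2) :=
        ENNReal.ofReal_le_ofReal (hpartial N)
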